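/- Let X be a metrizable, locally compact and locally connected topological space and let G be a countable group acting by homeomorphisms on X such that the orbit space X/G is Hausdorff. Then there exists a G-invariant metric on X inducing the topology of X. -/

import Mathlib

set_option linter.unusedSectionVars false

open Filter Topology Metric Set

namespace Stmt19Aux

variable {G X : Type*} [Group G] [Countable G] [MetricSpace X]
  [LocallyCompactSpace X] [LocallyConnectedSpace X] [MulAction G X] [ContinuousConstSMul G X]
  [T2Space (Quotient (MulAction.orbitRel G X))]

/-- If `x k → a` and `g k • x k → u` then `u` is in the orbit of `a`. -/
theorem limit_orbit {x : ℕ → X} {g : ℕ → G} {a u : X}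
    (hx : Tendsto x atTop (𝓝 a)) (hgx : Tendsto (fun k => g k • x k) atTop (𝓝 u)) :
    ∃ g₀ : G, g₀ • a = u := by
  set π : X → Quotient (MulAction.orbitRel G X) := fun z => Quotient.mk (MulAction.orbitRel G X) z with hπ
  have hπc : Continuous π := continuous_quot_mk
  have h1 : Tendsto (fun k => π (g k • x k)) atTop (𝓝 (π u)) := (hπc.tendsto u).comp hgx
  have h2 : (fun k => π (g k • x k)) = fun k => π (x k) := by
    funext k
    exact Quotient.sound (MulAction.mem_orbit (x k) (g k))
  rw [h2] at h1
  have h3 : Tendsto (fun k => π (x k)) atTop (𝓝 (π a)) := (hπc.tendsto a).comp hx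
  have h4 : π u = π a := tendsto_nhds_unique h1 h3
  have h5 : u ∈ MulAction.orbit G a := Quotient.exact h4
  exact MulAction.mem_orbit_iff.mp h5

/-- Orbits are discrete and closed: around any point there is a compact closed ball meeting
the orbit only in that point. -/
theorem disc (a : X) : ∃ ε > 0, IsCompact (closedBall a ε) ∧
    ∀ g : G, g • a ∈ closedBall a ε → g • a = a := by
  classical
  set π : X → Quotient (MulAction.orbitRel G X) := fun z => Quotient.mk (MulAction.orbitRel G X) z with hπ
  have hπc : Continuous π := continuous_quot_mk
  set A : Set X := MulAction.orbit G a with hA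
  have hAeq : A = π ⁻¹' {π a} := by
    ext z
    constructor
    · intro hz
      exact Quotient.sound hz
    · intro hz
      exact Quotient.exact hz
  have hAc : IsClosed A := by
    rw [hAeq]; exact (isClosed_singleton).preimage hπc
  -- the orbit, as a subspace, is Baire, countable, nonempty
  have hAcount : A.Countable := by
    rw [hA, MulAction.orbit]
    exact countable_range _
  haveI : Countable A := hAcount.to_subtype
  haveI : Nonempty A := ⟨⟨a, MulAction.mem_orbit_self a⟩⟩
  haveI : LocallyCompactSpace A := hAc.isClosedEmbedding_subtypeVal.locallyCompactSpace
  -- some point of the orbit is isolated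
  have hcover : (⋃ z : A, ({z} : Set A)) = univ := iUnion_of_singleton A
  obtain ⟨z, hz⟩ : ∃ z : A, (interior ({z} : Set A)).Nonempty :=
    nonempty_interior_of_iUnion_of_closed (fun z => isClosed_singleton) hcover
  have hzopen : IsOpen ({z} : Set A) := by
    obtain ⟨w, hw⟩ := hz
    have hw' : w ∈ ({z} : Set A) := interior_subset hw
    rw [mem_singleton_iff] at hw'
    subst hw'
    have h1 : ({w} : Set A) ⊆ interior {w} := by
      intro y hy
      rw [mem_singleton_iff] at hy; subst hy; exact hw
    have h2 : interior ({w} : Set A) = {w} := Subset.antisymm interior_subset h1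
    rw [← h2]; exact isOpen_interior
  obtain ⟨U, hUopen, hUpre⟩ := isOpen_induced_iff.mp hzopen
  -- transport isolation to the point a
  obtain ⟨h, hh⟩ : ∃ h : G, h • a = (z : X) := MulAction.mem_orbit_iff.mp z.2
  set V : Set X := (fun w => h⁻¹ • w) '' U with hV
  have hVopen : IsOpen V := isOpenMap_smul h⁻¹ U hUopen
  have haV : a ∈ V := by
    refine ⟨(z : X), ?_, ?_⟩
    · have : z ∈ (Subtype.val ⁻¹' U : Set A) := by rw [hUpre]; rfl
      exact this
    · rw [← hh]; simp
  have hVA : ∀ w ∈ A ∩ V, w = a := by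
    rintro w ⟨hwA, u₀, hu₀U, hu₀⟩
    have hw2 : h • w ∈ A := by
      obtain ⟨g', hg'⟩ := MulAction.mem_orbit_iff.mp hwA
      exact MulAction.mem_orbit_iff.mpr ⟨h * g', by rw [mul_smul, hg']⟩
    have hw3 : h • w = u₀ := by rw [← hu₀, smul_inv_smul]
    have : (⟨h • w, hw2⟩ : A) ∈ (Subtype.val ⁻¹' U : Set A) := by
      simp only [mem_preimage]; rw [hw3]; exact hu₀U
    rw [hUpre] at this
    have hz' : h • w = (z : X) := by
      simpa using congrArg Subtype.val this
    have : h • w = h • a := by rw [hz', ← hh]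
    exact smul_left_cancel h this
  -- compact small ball inside V
  obtain ⟨K, hKc, haK, hKV⟩ := exists_compact_subset hVopen haV
  have hKnhds : interior K ∈ 𝓝 a := isOpen_interior.mem_nhds haK
  obtain ⟨ε, hε, hball⟩ := Metric.mem_nhds_iff.mp hKnhds
  refine ⟨ε / 2, by linarith, ?_, ?_⟩
  · exact hKc.of_isClosed_subset Metric.isClosed_closedBall
      ((closedBall_subset_ball (by linarith)).trans (hball.trans interior_subset))
  · intro g hg
    have : g • a ∈ A ∩ V := by
      constructor
      · exact MulAction.mem_orbit_iff.mpr ⟨g, rfl⟩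
      · exact hKV (interior_subset (hball (closedBall_subset_ball (by linarith) hg)))
    exact hVA _ this


/-- A preconnected set reaching from near `a` to outside the `ε`-ball meets the shell. -/
theorem shell {C : Set X} (hC : IsPreconnected C) {a : X} {ε : ℝ} (hε : 0 < ε)
    {p q' : X} (hp : p ∈ C) (hq : q' ∈ C) (hp' : dist p a < ε / 2) (hq' : ¬ dist q' a < ε) :
    ∃ w ∈ C, ε / 2 ≤ dist w a ∧ dist w a ≤ ε := by
  by_contra hcon
  push_neg at hcon
  set u : Set X := {w | dist w a < ε / 2} with hu
  set v : Set X := {w | ε < dist w a} with hv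
  have huo : IsOpen u := isOpen_lt (continuous_id.dist continuous_const) continuous_const
  have hvo : IsOpen v := isOpen_lt continuous_const (continuous_id.dist continuous_const)
  have hsub : C ⊆ u ∪ v := by
    intro w hw
    rcases lt_or_ge (dist w a) (ε / 2) with h | h
    · exact Or.inl h
    · exact Or.inr (hcon w hw h)
  have hCu : (C ∩ u).Nonempty := ⟨p, hp, hp'⟩
  have hCv : (C ∩ v).Nonempty := by
    refine ⟨q', hq, ?_⟩
    have h1 : ε ≤ dist q' a := le_of_not_gt hq'
    exact hcon q' hq (by linarith)
  obtain ⟨w, hwC, hwu, hwv⟩ := hC u v huo hvo hsub hCu hCv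
  have h1 : dist w a < ε / 2 := hwu
  have h2 : ε < dist w a := hwv
  linarith

/-- Key lemma (local equicontinuity): if `x k → a` and `g k • x k → a`, then eventually the
`g k` map a fixed neighborhood of `a` into any small ball around `a`. -/
theorem L1 {a : X} {x : ℕ → X} {g : ℕ → G} {ε : ℝ}
    (hx : Tendsto x atTop (𝓝 a)) (hgx : Tendsto (fun k => g k • x k) atTop (𝓝 a))
    (hε : 0 < ε) (hcpt : IsCompact (closedBall a ε))
    (hdisc : ∀ gg : G, gg • a ∈ closedBall a ε → gg • a = a) :
    ∃ V ∈ 𝓝 a, ∃ N : ℕ, ∀ k ≥ N, ∀ v ∈ V, g k • v ∈ ball a ε := by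
  classical
  by_contra hcon
  push_neg at hcon
  -- connected neighborhood basis
  have hbasis : ∀ m : ℕ, ∃ U : Set X, a ∈ U ∧ IsOpen U ∧ IsConnected U ∧
      U ⊆ ball a (min (ε / 4) (1 / (m + 1))) := by
    intro m
    have hb : ball a (min (ε / 4) (1 / (m + 1))) ∈ 𝓝 a := by
      apply ball_mem_nhds
      have : (0:ℝ) < 1 / (m + 1) := by positivity
      exact lt_min (by linarith) this
    obtain ⟨U, hU1, hU2, hU3, hU4⟩ := locallyConnectedSpace_iff_subsets_isOpen_isConnected.mp
      (inferInstance) a _ hb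
    exact ⟨U, hU3, hU2, hU4, hU1⟩
  choose U haU hUo hUc hUb using hbasis
  -- eventual indices
  have hNm : ∀ m : ℕ, ∃ N : ℕ, ∀ k ≥ N, x k ∈ U m ∧ dist (g k • x k) a < ε / 4 := by
    intro m
    have h1 : ∀ᶠ k in atTop, x k ∈ U m := hx ((hUo m).mem_nhds (haU m))
    have h2 : ∀ᶠ k in atTop, dist (g k • x k) a < ε / 4 :=
      hgx (ball_mem_nhds a (by linarith))
    exact eventually_atTop.mp (h1.and h2)
  choose N hN using hNm
  -- chosen bad indices and witnesses
  have hbad : ∀ m : ℕ, ∃ k ≥ N m, ∃ v ∈ U m, g k • v ∉ ball a ε := by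
    intro m
    exact hcon (U m) ((hUo m).mem_nhds (haU m)) (N m)
  choose k hkN v hvU hvB using hbad
  -- shell points
  have hshell : ∀ m : ℕ, ∃ z ∈ U m, ε / 2 ≤ dist (g (k m) • z) a ∧ dist (g (k m) • z) a ≤ ε := by
    intro m
    have hC : IsPreconnected ((fun w => g (k m) • w) '' U m) :=
      ((hUc m).image _ (continuous_const_smul (g (k m))).continuousOn).isPreconnected
    have hp : g (k m) • x (k m) ∈ (fun w => g (k m) • w) '' U m :=
      mem_image_of_mem _ ((hN m (k m) (hkN m)).1)
    have hq : g (k m) • v m ∈ (fun w => g (k m) • w) '' U m :=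
      mem_image_of_mem _ (hvU m)
    have hp' : dist (g (k m) • x (k m)) a < ε / 2 := by
      have := (hN m (k m) (hkN m)).2; linarith
    have hq' : ¬ dist (g (k m) • v m) a < ε := by
      intro hcontra; exact hvB m (mem_ball.mpr hcontra)
    obtain ⟨w, hwC, hw1, hw2⟩ := shell hC hε hp hq hp' hq'
    obtain ⟨z, hzU, hzw⟩ := hwC
    have hzw' : g (k m) • z = w := hzw
    exact ⟨z, hzU, by rw [hzw']; exact hw1, by rw [hzw']; exact hw2⟩
  choose z hzU hz1 hz2 using hshell
  -- z m → a
  have hz3 : Tendsto z atTop (𝓝 a) := by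
    rw [Metric.tendsto_atTop]
    intro δ hδ
    obtain ⟨M, hM⟩ := exists_nat_one_div_lt hδ
    refine ⟨M, fun m hm => ?_⟩
    have h1 : z m ∈ ball a (min (ε / 4) (1 / (m + 1))) := hUb m (hzU m)
    have h2 : dist (z m) a < 1 / (m + 1) := lt_of_lt_of_le (mem_ball.mp h1) (min_le_right _ _)
    have h3 : (1 : ℝ) / (m + 1) ≤ 1 / (M + 1) := by
      apply one_div_le_one_div_of_le
      · positivity
      · exact_mod_cast by exact_mod_cast Nat.succ_le_succ hm
    calc dist (z m) a < 1 / (m + 1) := h2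
      _ ≤ 1 / (M + 1) := h3
      _ < δ := hM
  -- compactness: subsequence of shell points converges
  have hmem : ∀ m, g (k m) • z m ∈ closedBall a ε := fun m => mem_closedBall.mpr (hz2 m)
  obtain ⟨w, hwK, φ, hφ, hφlim⟩ := hcpt.tendsto_subseq hmem
  have hzφ : Tendsto (fun m => z (φ m)) atTop (𝓝 a) := hz3.comp hφ.tendsto_atTop
  obtain ⟨g₀, hg₀⟩ := limit_orbit hzφ hφlim
  have hw1 : ε / 2 ≤ dist w a := by
    have := le_of_tendsto_of_tendsto' tendsto_const_nhds
      (hφlim.dist tendsto_const_nhds) (fun m => hz1 (φ m))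
    simpa using this
  have : w = a := by rw [← hg₀] at hwK ⊢; exact hdisc g₀ hwK
  rw [this] at hw1
  simp at hw1
  linarith

/-- Eventually, `g k • a` equals the limit of `g k • x k` exactly. -/
theorem L2 {a u : X} {x : ℕ → X} {g : ℕ → G}
    (hx : Tendsto x atTop (𝓝 a)) (hgx : Tendsto (fun k => g k • x k) atTop (𝓝 u)) :
    ∀ᶠ k in atTop, g k • a = u := by
  obtain ⟨g₀, hg₀⟩ := limit_orbit hx hgx
  obtain ⟨ε, hε, hcpt, hdisc⟩ := disc (G := G) a
  have hmin : 0 < min ε ε := lt_min hε hε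
  set h : ℕ → G := fun k => g₀⁻¹ * g k with hh
  have hhx : Tendsto (fun k => h k • x k) atTop (𝓝 a) := by
    have h1 : Tendsto (fun k => g₀⁻¹ • (g k • x k)) atTop (𝓝 (g₀⁻¹ • u)) :=
      ((continuous_const_smul (g₀⁻¹ : G)).tendsto u).comp hgx
    have h2 : g₀⁻¹ • u = a := by rw [← hg₀, inv_smul_smul]
    rw [h2] at h1
    refine h1.congr fun k => ?_
    rw [mul_smul]
  obtain ⟨V, hV, N, hVN⟩ := L1 hx hhx hε hcpt hdisc
  rw [eventually_atTop]
  refine ⟨N, fun n hn => ?_⟩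
  have h3 : h n • a ∈ ball a ε := hVN n hn a (mem_of_mem_nhds hV)
  have h4 : h n • a = a := hdisc (h n) (ball_subset_closedBall h3)
  have h5 : g n • a = g₀ • (h n • a) := by rw [hh]; simp [mul_smul]
  rw [h5, h4, hg₀]


section SigmaCompact

variable {Y : Type*} [MetricSpace Y] [LocallyCompactSpace Y]

/-- The canonical "compactness radius" relative to an open set. -/
private noncomputable def crad (C : Set Y) (x : Y) : ℝ :=
  sSup {r : ℝ | 0 ≤ r ∧ r ≤ 1 ∧ IsCompact (closedBall x r) ∧ closedBall x r ⊆ C}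

private theorem crad_set_nonempty {C : Set Y} {x : Y} (hx : x ∈ C) :
    (0:ℝ) ∈ {r : ℝ | 0 ≤ r ∧ r ≤ 1 ∧ IsCompact (closedBall x r) ∧ closedBall x r ⊆ C} := by
  refine ⟨le_refl 0, zero_le_one, ?_, ?_⟩
  · rw [closedBall_zero]; exact isCompact_singleton
  · rw [closedBall_zero]; exact singleton_subset_iff.mpr hx

private theorem crad_bdd (C : Set Y) (x : Y) :
    BddAbove {r : ℝ | 0 ≤ r ∧ r ≤ 1 ∧ IsCompact (closedBall x r) ∧ closedBall x r ⊆ C} :=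
  ⟨1, fun r hr => hr.2.1⟩

private theorem crad_mem {C : Set Y} {x : Y} (hx : x ∈ C) {r : ℝ} (hr0 : 0 ≤ r)
    (hr : r < crad C x) :
    r ≤ 1 ∧ IsCompact (closedBall x r) ∧ closedBall x r ⊆ C := by
  obtain ⟨r', hr'mem, hrr'⟩ := exists_lt_of_lt_csSup ⟨0, crad_set_nonempty hx⟩ hr
  obtain ⟨h0, h1, h2, h3⟩ := hr'mem
  have hsub : closedBall x r ⊆ closedBall x r' := closedBall_subset_closedBall hrr'.le
  exact ⟨le_trans hrr'.le h1, h2.of_isClosed_subset Metric.isClosed_closedBall hsub,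
    hsub.trans h3⟩

private theorem crad_nonneg {C : Set Y} {x : Y} (hx : x ∈ C) : 0 ≤ crad C x :=
  le_csSup (crad_bdd C x) (crad_set_nonempty hx)

private theorem crad_le_one {C : Set Y} {x : Y} (hx : x ∈ C) : crad C x ≤ 1 :=
  csSup_le ⟨0, crad_set_nonempty hx⟩ (fun r hr => hr.2.1)

private theorem crad_pos {C : Set Y} (hC : IsOpen C) {x : Y} (hx : x ∈ C) : 0 < crad C x := by
  obtain ⟨K, hKc, hxK, hKC⟩ := exists_compact_subset hC hx
  obtain ⟨δ, hδ, hball⟩ := Metric.mem_nhds_iff.mp (isOpen_interior.mem_nhds hxK)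
  have hmem : min (δ / 2) 1 ∈ {r : ℝ | 0 ≤ r ∧ r ≤ 1 ∧ IsCompact (closedBall x r) ∧
      closedBall x r ⊆ C} := by
    have hsub : closedBall x (min (δ / 2) 1) ⊆ ball x δ := by
      apply (closedBall_subset_closedBall (min_le_left _ _)).trans
      exact closedBall_subset_ball (by linarith)
    refine ⟨le_min (by linarith) zero_le_one, min_le_right _ _, ?_, ?_⟩
    · exact hKc.of_isClosed_subset Metric.isClosed_closedBall
        (hsub.trans (hball.trans interior_subset))
    · exact hsub.trans (hball.trans (interior_subset.trans hKC))
  have h9 : min (δ / 2) 1 ≤ crad C x := le_csSup (crad_bdd C x) hmem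
  have hpos : (0:ℝ) < min (δ / 2) 1 := lt_min (by linarith) one_pos
  linarith

private theorem le_crad {C : Set Y} {x : Y} {r : ℝ}
    (hr : r ∈ {r : ℝ | 0 ≤ r ∧ r ≤ 1 ∧ IsCompact (closedBall x r) ∧ closedBall x r ⊆ C}) :
    r ≤ crad C x :=
  le_csSup (crad_bdd C x) hr

private theorem crad_lip {C : Set Y} {x y : Y} (hx : x ∈ C) (hy : y ∈ C) :
    crad C x - dist x y ≤ crad C y := by
  rcases le_or_gt (crad C x - dist x y) 0 with h | h
  · exact h.trans (crad_nonneg hy)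
  · have key : ∀ c : ℝ, 0 ≤ c → c < crad C x - dist x y → c ≤ crad C y := by
      intro c hc0 hclt
      have hcd : c + dist x y < crad C x := by linarith
      obtain ⟨hle1, h2, h3⟩ := crad_mem hx (by positivity) hcd
      have hsub : closedBall y c ⊆ closedBall x (c + dist x y) := by
        intro w hw
        rw [mem_closedBall] at hw ⊢
        calc dist w x ≤ dist w y + dist y x := dist_triangle _ _ _
          _ ≤ c + dist x y := by rw [dist_comm y x]; linarith
      refine le_crad ⟨hc0, ?_, h2.of_isClosed_subset Metric.isClosed_closedBall hsub, hsub.trans h3⟩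
      have hd : (0:ℝ) ≤ dist x y := dist_nonneg
      linarith
    by_contra hcon
    push_neg at hcon
    have h0 : 0 ≤ crad C y := crad_nonneg hy
    have hc0 : 0 ≤ (crad C y + (crad C x - dist x y)) / 2 := by linarith
    have hclt : (crad C y + (crad C x - dist x y)) / 2 < crad C x - dist x y := by linarith
    have := key _ hc0 hclt
    linarith

/-- A nonempty clopen preconnected subset of a locally compact metric space is σ-compact. -/
theorem isSigmaCompact_of_isClopen_of_isPreconnected {C : Set Y} (hCo : IsOpen C)
    (hCc : IsClosed C) (hCconn : IsPreconnected C) {x₀ : Y} (hx₀ : x₀ ∈ C) :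
    IsSigmaCompact C := by
  classical
  -- iterated thickenings
  set K : ℕ → Set Y := fun n => Nat.rec ({x₀} : Set Y)
    (fun _ Kn => {z | ∃ y ∈ Kn, dist z y ≤ crad C y / 3}) n with hK
  have hK0 : K 0 = {x₀} := rfl
  have hKsucc : ∀ n, K (n + 1) = {z | ∃ y ∈ K n, dist z y ≤ crad C y / 3} := fun n => rfl
  -- invariant
  have hinv : ∀ n, IsCompact (K n) ∧ K n ⊆ C ∧ (K n).Nonempty := by
    intro n
    induction n with
    | zero =>
      rw [hK0]
      exact ⟨isCompact_singleton, singleton_subset_iff.mpr hx₀, ⟨x₀, rfl⟩⟩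
    | succ n ih =>
      obtain ⟨hcpt, hsubC, hne⟩ := ih
      have hsubC' : K (n + 1) ⊆ C := by
        rw [hKsucc]
        rintro z ⟨y, hyK, hyz⟩
        have hyC : y ∈ C := hsubC hyK
        have hpos := crad_pos hCo hyC
        have hlt : crad C y / 3 < crad C y := by linarith
        obtain ⟨_, _, h3⟩ := crad_mem hyC (by linarith) hlt
        exact h3 (mem_closedBall.mpr hyz)
      have hclosed : IsClosed (K (n + 1)) := by
        rw [hKsucc]
        apply IsSeqClosed.isClosed
        intro zs z hzs hz
        -- choose witnesses
        have hw : ∀ j, ∃ y ∈ K n, dist (zs j) y ≤ crad C y / 3 := fun j => hzs j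
        choose ys hysK hysd using hw
        obtain ⟨y, hyK, φ, hφ, hφlim⟩ := hcpt.tendsto_subseq hysK
        have hyC : y ∈ C := hsubC hyK
        have hzφ : Tendsto (fun j => zs (φ j)) atTop (𝓝 z) := hz.comp hφ.tendsto_atTop
        refine ⟨y, hyK, ?_⟩
        have hcont : Tendsto (fun j => dist (zs (φ j)) (ys (φ j))) atTop (𝓝 (dist z y)) :=
          hzφ.dist hφlim
        have hcrad : Tendsto (fun j => crad C (ys (φ j)) / 3) atTop (𝓝 (crad C y / 3)) := by
          apply Tendsto.div_const
          -- crad is Lipschitz on C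
          rw [Metric.tendsto_atTop]
          intro δ hδ
          have := Metric.tendsto_atTop.mp hφlim δ hδ
          obtain ⟨N, hN⟩ := this
          refine ⟨N, fun j hj => ?_⟩
          have h1 := crad_lip (hsubC (hysK (φ j))) hyC
          have h2 := crad_lip hyC (hsubC (hysK (φ j)))
          have h3 : dist (ys (φ j)) y < δ := hN j hj
          rw [Real.dist_eq]
          rw [dist_comm] at h2
          have := abs_lt.mpr (⟨by linarith, by linarith⟩ :
            -δ < crad C (ys (φ j)) - crad C y ∧ crad C (ys (φ j)) - crad C y < δ)
          exact this
        exact le_of_tendsto_of_tendsto' hcont hcrad (fun j => hysd (φ j))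
      have hcpt' : IsCompact (K (n + 1)) := by
        -- crad is continuous on K n
        have hcont : ContinuousOn (crad C) (K n) := by
          rw [Metric.continuousOn_iff]
          intro y hyK δ hδ
          refine ⟨δ, hδ, fun z hzK hdz => ?_⟩
          have h1 := crad_lip (hsubC hzK) (hsubC hyK)
          have h2 := crad_lip (hsubC hyK) (hsubC hzK)
          have hdc : dist y z = dist z y := dist_comm y z
          rw [Real.dist_eq, abs_lt]
          constructor <;> linarith
        obtain ⟨y₀, hy₀K, hy₀min⟩ := hcpt.exists_isMinOn hne hcont
        set m := crad C y₀ with hmdef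
        have hm : 0 < m := crad_pos hCo (hsubC hy₀K)
        obtain ⟨t, htK, htcover⟩ := hcpt.elim_nhds_subcover (fun y => ball y (m / 4))
          (fun y _ => ball_mem_nhds y (by linarith))
        have hsubun : K (n + 1) ⊆ ⋃ y ∈ t, closedBall y (2 / 3 * crad C y) := by
          rw [hKsucc]
          rintro z ⟨y, hyK, hyz⟩
          obtain ⟨yi, hyit, hyyi⟩ := mem_iUnion₂.mp (htcover hyK)
          have hyiK : yi ∈ K n := htK yi hyit
          have hyiC : yi ∈ C := hsubC hyiK
          have hyC : y ∈ C := hsubC hyK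
          have hlipy : crad C y - dist y yi ≤ crad C yi := crad_lip hyC hyiC
          have hdyyi : dist y yi < m / 4 := mem_ball.mp hyyi
          have hmyi : m ≤ crad C yi := hy₀min hyiK
          refine mem_iUnion₂.mpr ⟨yi, hyit, mem_closedBall.mpr ?_⟩
          calc dist z yi ≤ dist z y + dist y yi := dist_triangle _ _ _
            _ ≤ crad C y / 3 + m / 4 := by linarith
            _ ≤ (crad C yi + m / 4) / 3 + m / 4 := by linarith
            _ = crad C yi / 3 + m / 3 := by ring
            _ ≤ crad C yi / 3 + crad C yi / 3 := by linarith
            _ ≤ 2 / 3 * crad C yi := by ring_nf; linarith [crad_nonneg hyiC]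
        have hUcpt : IsCompact (⋃ y ∈ t, closedBall y (2 / 3 * crad C y)) := by
          apply t.finite_toSet.isCompact_biUnion
          intro y hyt
          have hyC : y ∈ C := hsubC (htK y hyt)
          have hpos := crad_pos hCo hyC
          have hlt : 2 / 3 * crad C y < crad C y := by linarith
          exact (crad_mem hyC (by linarith) hlt).2.1
        exact hUcpt.of_isClosed_subset hclosed hsubun
      refine ⟨hcpt', hsubC', ?_⟩
      obtain ⟨y, hy⟩ := hne
      refine ⟨y, ?_⟩
      rw [hKsucc]
      have h0 : (0:ℝ) ≤ crad C y / 3 := by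
        have := crad_nonneg (hsubC hy); linarith
      exact ⟨y, hy, by rw [dist_self]; exact h0⟩
  -- the union
  have hKC : ∀ n, K n ⊆ C := fun n => (hinv n).2.1
  have hopen : IsOpen (⋃ n, K n) := by
    rw [Metric.isOpen_iff]
    intro z hz
    obtain ⟨n, hn⟩ := mem_iUnion.mp hz
    have hzC : z ∈ C := hKC n hn
    have hpos := crad_pos hCo hzC
    refine ⟨crad C z / 3, by linarith, fun w hw => ?_⟩
    refine mem_iUnion.mpr ⟨n + 1, ?_⟩
    rw [hKsucc]
    exact ⟨z, hn, (mem_ball.mp hw).le⟩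
  have hclosedU : IsClosed (⋃ n, K n) := by
    rw [← closure_subset_iff_isClosed]
    intro z hzcl
    have hzC : z ∈ C := by
      have h1 : closure (⋃ n, K n) ⊆ closure C :=
        closure_mono (iUnion_subset fun n => hKC n)
      rw [hCc.closure_eq] at h1
      exact h1 hzcl
    have hpos := crad_pos hCo hzC
    obtain ⟨w, hwU, hwd⟩ := Metric.mem_closure_iff.mp hzcl (crad C z / 6) (by linarith)
    obtain ⟨n, hn⟩ := mem_iUnion.mp hwU
    have hwC : w ∈ C := hKC n hn
    have hlip := crad_lip hzC hwC
    refine mem_iUnion.mpr ⟨n + 1, ?_⟩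
    rw [hKsucc]
    exact ⟨w, hn, by linarith⟩
  have hCsub : C ⊆ ⋃ n, K n := by
    by_contra hcon
    have hCv : (C ∩ (⋃ n, K n)ᶜ).Nonempty := by
      rw [Set.not_subset] at hcon
      obtain ⟨z, hz1, hz2⟩ := hcon
      exact ⟨z, hz1, hz2⟩
    have hCu : (C ∩ ⋃ n, K n).Nonempty :=
      ⟨x₀, hx₀, mem_iUnion.mpr ⟨0, by rw [hK0]; rfl⟩⟩
    obtain ⟨w, _, hw2, hw3⟩ := hCconn (⋃ n, K n) (⋃ n, K n)ᶜ hopen hclosedU.isOpen_compl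
      (fun z _ => by by_cases h : z ∈ ⋃ n, K n; exacts [Or.inl h, Or.inr h]) hCu hCv
    exact hw3 hw2
  refine ⟨K, fun n => (hinv n).1, ?_⟩
  exact Subset.antisymm (iUnion_subset fun n => hKC n) hCsub

end SigmaCompact

section Sector

variable (G)

/-- The "sector" of a point: the orbit of its connected component. -/
def sec (a : X) : Set X := ⋃ g : G, (fun z => g • z) '' connectedComponent a

variable {G}

theorem smul_connectedComponent (g : G) (a : X) :
    (fun z => g • z) '' connectedComponent a = connectedComponent (g • a) := by
  apply Subset.antisymm
  · apply IsPreconnected.subset_connectedComponent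
    · exact (isPreconnected_connectedComponent.image _
        (continuous_const_smul g).continuousOn)
    · exact mem_image_of_mem _ mem_connectedComponent
  · intro z hz
    have h1 : (fun w => g⁻¹ • w) '' connectedComponent (g • a) ⊆ connectedComponent a := by
      apply IsPreconnected.subset_connectedComponent
      · exact (isPreconnected_connectedComponent.image _
          (continuous_const_smul g⁻¹).continuousOn)
      · refine ⟨g • a, mem_connectedComponent, by simp⟩
    refine ⟨g⁻¹ • z, h1 (mem_image_of_mem _ hz), by simp⟩

theorem mem_sec_self (a : X) : a ∈ sec G a :=
  mem_iUnion.mpr ⟨1, by rw [smul_connectedComponent, one_smul]; exact mem_connectedComponent⟩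

theorem sec_eq_of_connectedComponent_eq {a b : X} (h : connectedComponent a = connectedComponent b) :
    sec G a = sec G b := by
  unfold sec; rw [h]

theorem sec_smul (g : G) (a : X) : sec G (g • a) = sec G a := by
  apply Subset.antisymm
  · intro z hz
    obtain ⟨h, hh⟩ := mem_iUnion.mp hz
    rw [smul_connectedComponent] at hh
    refine mem_iUnion.mpr ⟨h * g, ?_⟩
    rw [smul_connectedComponent, mul_smul]
    exact hh
  · intro z hz
    obtain ⟨h, hh⟩ := mem_iUnion.mp hz
    rw [smul_connectedComponent] at hh
    refine mem_iUnion.mpr ⟨h * g⁻¹, ?_⟩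
    rw [smul_connectedComponent, mul_smul, inv_smul_smul]
    exact hh

theorem sec_eq_of_mem {a b : X} (h : b ∈ sec G a) : sec G b = sec G a := by
  obtain ⟨g, hg⟩ := mem_iUnion.mp h
  rw [smul_connectedComponent] at hg
  have h1 : connectedComponent b = connectedComponent (g • a) := (connectedComponent_eq hg).symm
  rw [sec_eq_of_connectedComponent_eq h1, sec_smul]

theorem sec_isOpen (a : X) : IsOpen (sec G a) :=
  isOpen_iUnion fun g => isOpenMap_smul g _ isOpen_connectedComponent

theorem sec_isClosed (a : X) : IsClosed (sec G a) := by
  rw [← isOpen_compl_iff]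
  rw [isOpen_iff_mem_nhds]
  intro z hz
  rw [_root_.mem_nhds_iff]
  refine ⟨connectedComponent z, ?_, isOpen_connectedComponent, mem_connectedComponent⟩
  intro w hw
  simp only [mem_compl_iff]
  intro hcon
  apply hz
  obtain ⟨g, hg⟩ := mem_iUnion.mp hcon
  rw [smul_connectedComponent] at hg
  have h1 : connectedComponent w = connectedComponent (g • a) := (connectedComponent_eq hg).symm
  have h2 : connectedComponent w = connectedComponent z := (connectedComponent_eq hw).symm
  have h3 : z ∈ connectedComponent (g • a) := by
    rw [← h1, h2]; exact mem_connectedComponent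
  exact mem_iUnion.mpr ⟨g, by rw [smul_connectedComponent]; exact h3⟩

theorem sec_isSigmaCompact (a : X) : IsSigmaCompact (sec G a) := by
  apply isSigmaCompact_iUnion
  intro g
  apply IsSigmaCompact.image (continuous_const_smul g)
  exact isSigmaCompact_of_isClopen_of_isPreconnected isOpen_connectedComponent
    isClosed_connectedComponent isPreconnected_connectedComponent mem_connectedComponent

end Sector

section Bumps

/-- Existence of a countable family of compactly supported "bump data" covering a σ-compact set. -/
theorem exists_bump_family {t : Set X} (ht : IsSigmaCompact t) (hne : t.Nonempty) :
    ∃ F : ℕ → X × ℝ, (∀ n, 0 < (F n).2 ∧ IsCompact (closedBall (F n).1 (F n).2)) ∧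
      ∀ x ∈ t, ∃ n, dist x (F n).1 ≤ (F n).2 / 2 := by
  classical
  obtain ⟨K, hKc, hKU⟩ := ht
  have hrad : ∀ x : X, ∃ r : ℝ, 0 < r ∧ IsCompact (closedBall x r) := by
    intro x
    obtain ⟨L, hLc, hxL, _⟩ := exists_compact_subset isOpen_univ (mem_univ x)
    obtain ⟨δ, hδ, hball⟩ := Metric.mem_nhds_iff.mp (isOpen_interior.mem_nhds hxL)
    refine ⟨δ / 2, by linarith, hLc.of_isClosed_subset Metric.isClosed_closedBall ?_⟩
    exact (closedBall_subset_ball (by linarith)).trans (hball.trans interior_subset)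
  choose rad hradpos hradcpt using hrad
  have hcover : ∀ m : ℕ, ∃ s : Finset X, (∀ y ∈ s, y ∈ K m) ∧
      K m ⊆ ⋃ y ∈ s, ball y (rad y / 2) := by
    intro m
    obtain ⟨s, hs1, hs2⟩ := (hKc m).elim_nhds_subcover (fun y => ball y (rad y / 2))
      (fun y _ => ball_mem_nhds y (by have := hradpos y; linarith))
    exact ⟨s, hs1, hs2⟩
  choose cov hcovK hcovsub using hcover
  -- index type
  set I := Σ m : ℕ, {y : X // y ∈ cov m} with hI
  haveI : Countable I := by
    haveI : ∀ m : ℕ, Countable {y : X // y ∈ cov m} := fun m =>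
      Finite.to_countable
    infer_instance
  have hIne : Nonempty I := by
    obtain ⟨x, hx⟩ := hne
    rw [← hKU] at hx
    obtain ⟨m, hm⟩ := mem_iUnion.mp hx
    have := hcovsub m hm
    obtain ⟨y, hy, _⟩ := mem_iUnion₂.mp this
    exact ⟨⟨m, ⟨y, hy⟩⟩⟩
  obtain ⟨e, he⟩ := exists_surjective_nat I
  refine ⟨fun n => ((e n).2.1, rad (e n).2.1), fun n => ⟨hradpos _, hradcpt _⟩, ?_⟩
  intro x hx
  rw [← hKU] at hx
  obtain ⟨m, hm⟩ := mem_iUnion.mp hx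
  obtain ⟨y, hy, hxy⟩ := mem_iUnion₂.mp (hcovsub m hm)
  obtain ⟨n, hn⟩ := he ⟨m, ⟨y, hy⟩⟩
  have h2 : ((e n).2 : X) = y := by rw [hn]
  refine ⟨n, ?_⟩
  show dist x ((e n).2 : X) ≤ rad ((e n).2 : X) / 2
  rw [h2]
  exact (mem_ball.mp hxy).le

end Bumps

section Q

variable {Y : Type*} [MetricSpace Y]

/-- Bump function. -/
noncomputable def bump (c : Y) (r : ℝ) : Y → ℝ := fun z => max 0 (1 - dist z c / r)

theorem bump_nonneg (c : Y) (r : ℝ) (z : Y) : 0 ≤ bump c r z := le_max_left _ _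

theorem bump_le_one (c : Y) {r : ℝ} (hr : 0 < r) (z : Y) : bump c r z ≤ 1 := by
  apply max_le zero_le_one
  have h1 : 0 ≤ dist z c / r := div_nonneg dist_nonneg hr.le
  linarith

theorem bump_continuous (c : Y) (r : ℝ) : Continuous (bump c r) :=
  continuous_const.max (continuous_const.sub ((continuous_id.dist continuous_const).div_const r))

theorem bump_center {c : Y} {r : ℝ} (hr : 0 < r) {z : Y} (hz : dist z c ≤ r / 2) :
    1 / 2 ≤ bump c r z := by
  have h1 : dist z c / r ≤ 1 / 2 := by
    rw [div_le_div_iff₀ hr (by norm_num)]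
    linarith
  have h2 : 1 / 2 ≤ 1 - dist z c / r := by linarith
  exact le_trans h2 (le_max_right _ _)

theorem bump_level_compact {c : Y} {r : ℝ} (hr : 0 < r) (hcpt : IsCompact (closedBall c r))
    {u : ℝ} (hu : 0 < u) : IsCompact {z : Y | u ≤ bump c r z} := by
  apply hcpt.of_isClosed_subset
  · exact isClosed_le continuous_const (bump_continuous c r)
  · intro z hz
    have h1 : u ≤ max 0 (1 - dist z c / r) := hz
    have h2 : u ≤ 1 - dist z c / r := by
      rcases le_max_iff.mp h1 with h | h
      · linarith
      · exact h
    have h3 : dist z c / r ≤ 1 - u := by linarith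
    rw [mem_closedBall]
    rw [div_le_iff₀ hr] at h3
    nlinarith [dist_nonneg (x := z) (y := c)]

/-- The cutoff pseudometric associated to a bump function. -/
noncomputable def qfn (θ : Y → ℝ) (a b : Y) : ℝ :=
  min (min (dist a b) 1 + |θ a - θ b|) (θ a + θ b)

theorem qfn_nonneg {θ : Y → ℝ} (h0 : ∀ z, 0 ≤ θ z) (a b : Y) : 0 ≤ qfn θ a b := by
  apply le_min
  · have h1 : (0:ℝ) ≤ min (dist a b) 1 := le_min dist_nonneg zero_le_one
    have h2 : (0:ℝ) ≤ |θ a - θ b| := abs_nonneg _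
    linarith
  · linarith [h0 a, h0 b]

theorem qfn_le_sum (θ : Y → ℝ) (a b : Y) : qfn θ a b ≤ θ a + θ b := min_le_right _ _

theorem qfn_le_two {θ : Y → ℝ} (h1 : ∀ z, θ z ≤ 1) (a b : Y) : qfn θ a b ≤ 2 := by
  have := qfn_le_sum θ a b
  linarith [h1 a, h1 b]

theorem qfn_self {θ : Y → ℝ} (h0 : ∀ z, 0 ≤ θ z) (a : Y) : qfn θ a a = 0 := by
  unfold qfn
  rw [dist_self, sub_self, abs_zero]
  rw [min_eq_left zero_le_one]
  have h2 : (0:ℝ) + 0 = 0 := by ring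
  rw [h2]
  exact min_eq_left (by linarith [h0 a])

theorem qfn_symm (θ : Y → ℝ) (a b : Y) : qfn θ a b = qfn θ b a := by
  unfold qfn
  rw [dist_comm, abs_sub_comm, add_comm (θ a)]

private theorem min_one_subadd (x y : ℝ) (hx : 0 ≤ x) (hy : 0 ≤ y) :
    min (x + y) 1 ≤ min x 1 + min y 1 := by
  rcases le_total x 1 with h1 | h1
  · rcases le_total y 1 with h2 | h2
    · rw [min_eq_left h1, min_eq_left h2]; exact min_le_left _ _
    · rw [min_eq_right h2]
      have h3 : 0 ≤ min x 1 := le_min hx zero_le_one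
      linarith [min_le_right (x + y) (1:ℝ)]
  · rw [min_eq_right h1]
    have h3 : 0 ≤ min y 1 := le_min hy zero_le_one
    linarith [min_le_right (x + y) (1:ℝ)]

theorem qfn_mono_aux {θ : Y → ℝ} (h0 : ∀ z, 0 ≤ θ z) (u v : Y) : θ v - θ u ≤ qfn θ u v := by
  apply le_min
  · have h1 : θ v - θ u ≤ |θ u - θ v| := by
      rw [abs_sub_comm]
      exact le_abs_self _
    have h2 : (0:ℝ) ≤ min (dist u v) 1 := le_min dist_nonneg zero_le_one
    linarith
  · linarith [h0 u]

theorem qfn_triangle {θ : Y → ℝ} (h0 : ∀ z, 0 ≤ θ z) (a b c : Y) :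
    qfn θ a c ≤ qfn θ a b + qfn θ b c := by
  rcases min_cases (min (dist a b) 1 + |θ a - θ b|) (θ a + θ b) with ⟨hab, _⟩ | ⟨hab, _⟩
  · rcases min_cases (min (dist b c) 1 + |θ b - θ c|) (θ b + θ c) with ⟨hbc, _⟩ | ⟨hbc, _⟩
    · -- both are the "e" branch
      have he : min (dist a c) 1 + |θ a - θ c| ≤
          (min (dist a b) 1 + |θ a - θ b|) + (min (dist b c) 1 + |θ b - θ c|) := by
        have h1 : min (dist a c) 1 ≤ min (dist a b + dist b c) 1 :=
          min_le_min (dist_triangle a b c) le_rfl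
        have h2 := min_one_subadd (dist a b) (dist b c) dist_nonneg dist_nonneg
        have h3 : |θ a - θ c| ≤ |θ a - θ b| + |θ b - θ c| := abs_sub_le _ _ _
        linarith
      calc qfn θ a c ≤ min (dist a c) 1 + |θ a - θ c| := min_le_left _ _
        _ ≤ _ := he
        _ = qfn θ a b + qfn θ b c := by rw [← hab, ← hbc]; rfl
    · -- qbc = θ b + θ c
      have h1 : qfn θ a c ≤ θ a + θ c := min_le_right _ _
      have h2 : θ a - θ b ≤ qfn θ a b := by
        rw [qfn_symm]
        exact qfn_mono_aux h0 b a
      have h3 : qfn θ b c = θ b + θ c := by rw [← hbc]; rfl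
      linarith
  · have h1 : qfn θ a c ≤ θ a + θ c := min_le_right _ _
    have h2 : θ c - θ b ≤ qfn θ b c := qfn_mono_aux h0 b c
    have h3 : qfn θ a b = θ a + θ b := by rw [← hab]; rfl
    linarith

end Q

section Sigma

/-- The invariant pseudometric obtained by taking the supremum over the group. -/
noncomputable def sig (G : Type*) [Group G] {X : Type*} [MetricSpace X] [MulAction G X]
    (θ : X → ℝ) (a b : X) : ℝ :=
  ⨆ g : G, qfn θ (g • a) (g • b)

variable {θ : X → ℝ}

theorem sig_bdd (h1 : ∀ z, θ z ≤ 1) (a b : X) :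
    BddAbove (Set.range fun g : G => qfn θ (g • a) (g • b)) := by
  refine ⟨2, ?_⟩
  rintro r ⟨g, rfl⟩
  exact qfn_le_two h1 _ _

theorem le_sig (h1 : ∀ z, θ z ≤ 1) (a b : X) : qfn θ a b ≤ sig G θ a b := by
  have := le_ciSup (sig_bdd (G := G) h1 a b) (1 : G)
  simp only [one_smul] at this
  exact this

theorem sig_nonneg (h0 : ∀ z, 0 ≤ θ z) (h1 : ∀ z, θ z ≤ 1) (a b : X) : 0 ≤ sig G θ a b :=
  le_trans (qfn_nonneg h0 a b) (le_sig h1 a b)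

theorem sig_le_two (h1 : ∀ z, θ z ≤ 1) (a b : X) : sig G θ a b ≤ 2 :=
  ciSup_le fun g => qfn_le_two h1 _ _

theorem sig_self (h0 : ∀ z, 0 ≤ θ z) (a : X) : sig G θ a a = 0 := by
  unfold sig
  have h : (fun g : G => qfn θ (g • a) (g • a)) = fun _ => (0:ℝ) :=
    funext fun g => qfn_self h0 _
  rw [h]
  exact ciSup_const

theorem sig_symm (a b : X) : sig G θ a b = sig G θ b a := by
  unfold sig
  congr 1
  exact funext fun g => qfn_symm θ _ _

theorem sig_triangle (h0 : ∀ z, 0 ≤ θ z) (h1 : ∀ z, θ z ≤ 1) (a b c : X) :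
    sig G θ a c ≤ sig G θ a b + sig G θ b c := by
  apply ciSup_le
  intro g
  calc qfn θ (g • a) (g • c) ≤ qfn θ (g • a) (g • b) + qfn θ (g • b) (g • c) :=
        qfn_triangle h0 _ _ _
    _ ≤ sig G θ a b + sig G θ b c :=
        add_le_add (le_ciSup (sig_bdd h1 a b) g) (le_ciSup (sig_bdd h1 b c) g)

theorem sig_smul (h1 : ∀ z, θ z ≤ 1) (h : G) (a b : X) :
    sig G θ (h • a) (h • b) = sig G θ a b := by
  apply le_antisymm
  · apply ciSup_le
    intro g
    have he : qfn θ (g • h • a) (g • h • b) = qfn θ ((g * h) • a) ((g * h) • b) := by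
      rw [mul_smul, mul_smul]
    rw [he]
    exact le_ciSup (sig_bdd h1 a b) (g * h)
  · apply ciSup_le
    intro g
    have he : qfn θ (g • a) (g • b) = qfn θ ((g * h⁻¹) • (h • a)) ((g * h⁻¹) • (h • b)) := by
      rw [smul_smul, smul_smul, inv_mul_cancel_right]
    rw [he]
    exact le_ciSup (sig_bdd h1 (h • a) (h • b)) (g * h⁻¹)

theorem sig_lower (h0 : ∀ z, 0 ≤ θ z) (h1 : ∀ z, θ z ≤ 1) {a b : X} (ha : 1 / 2 ≤ θ a) :
    min (dist a b) (1 / 2) ≤ sig G θ a b := by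
  refine le_trans ?_ (le_sig h1 a b)
  apply le_min
  · have h2 : min (dist a b) (1/2) ≤ min (dist a b) 1 :=
      min_le_min le_rfl (by norm_num)
    have h3 : (0:ℝ) ≤ |θ a - θ b| := abs_nonneg _
    linarith
  · have h2 : min (dist a b) (1/2) ≤ 1/2 := min_le_right _ _
    linarith [h0 b]

/-- Continuity of the invariant pseudometric at the diagonal (the key analytic step). -/
theorem sig_cont (hθc : Continuous θ) (h0 : ∀ z, 0 ≤ θ z) (h1 : ∀ z, θ z ≤ 1)
    (hlev : ∀ u : ℝ, 0 < u → IsCompact {z : X | u ≤ θ z}) (a : X) {ε : ℝ} (hε : 0 < ε) :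
    ∃ δ > 0, ∀ b, dist a b < δ → sig G θ a b ≤ ε := by
  classical
  by_contra hcon
  push_neg at hcon
  have hseq : ∀ k : ℕ, ∃ b : X, dist a b < 1 / (k + 1) ∧ ε < sig G θ a b := by
    intro k
    obtain ⟨b, hb1, hb2⟩ := hcon (1 / (k + 1)) (by positivity)
    exact ⟨b, hb1, hb2⟩
  choose b hbd hbs using hseq
  have hbtend : Tendsto b atTop (𝓝 a) := by
    rw [Metric.tendsto_atTop]
    intro δ hδ
    obtain ⟨M, hM⟩ := exists_nat_one_div_lt hδ
    refine ⟨M, fun k hk => ?_⟩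
    have h2 : (1:ℝ) / (k + 1) ≤ 1 / (M + 1) := by
      apply one_div_le_one_div_of_le
      · positivity
      · exact_mod_cast Nat.succ_le_succ hk
    rw [dist_comm]
    calc dist a (b k) < 1 / (k + 1) := hbd k
      _ ≤ 1 / (M + 1) := h2
      _ < δ := hM
  have hg : ∀ k : ℕ, ∃ g : G, ε < qfn θ (g • a) (g • b k) := by
    intro k
    exact exists_lt_of_lt_ciSup (hbs k)
  choose g hq using hg
  have hsum : ∀ k, ε < θ (g k • a) + θ (g k • b k) :=
    fun k => lt_of_lt_of_le (hq k) (min_le_right _ _)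
  by_cases hfreq : ∃ᶠ k in atTop, ε / 4 < θ (g k • a)
  · -- Case I
    obtain ⟨φ, hφmono, hφprop⟩ := Filter.extraction_of_frequently_atTop hfreq
    have hmem : ∀ m, g (φ m) • a ∈ {z : X | ε / 4 ≤ θ z} := fun m => (hφprop m).le
    obtain ⟨u, huK, ψ, hψmono, hψlim⟩ := (hlev (ε / 4) (by linarith)).tendsto_subseq hmem
    set Γ : ℕ → G := fun m => g (φ (ψ m)) with hΓ
    have hΓa : Tendsto (fun m => Γ m • a) atTop (𝓝 u) := hψlim
    have hev : ∀ᶠ m in atTop, Γ m • a = u :=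
      L2 (x := fun _ => a) tendsto_const_nhds hΓa
    obtain ⟨M₀, hM₀⟩ := eventually_atTop.mp hev
    set gb : G := Γ M₀ with hgb
    have hgba : gb • a = u := hM₀ M₀ le_rfl
    have hbsub : Tendsto (fun m => b (φ (ψ m))) atTop (𝓝 a) :=
      hbtend.comp (hφmono.comp hψmono).tendsto_atTop
    have hgoal : Tendsto (fun m => Γ m • b (φ (ψ m))) atTop (𝓝 u) := by
      have hkey : Tendsto (fun m => (gb⁻¹ * Γ m) • b (φ (ψ m))) atTop (𝓝 a) := by
        rw [Metric.tendsto_atTop]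
        intro ε' hε'
        obtain ⟨ε₀, hε₀, hcpt₀, hdisc₀⟩ := disc (G := G) a
        set ε'' := min ε' ε₀ with hε''def
        have hε''pos : 0 < ε'' := lt_min hε' hε₀
        have hcpt'' : IsCompact (closedBall a ε'') :=
          hcpt₀.of_isClosed_subset Metric.isClosed_closedBall
            (closedBall_subset_closedBall (min_le_right _ _))
        have hdisc'' : ∀ gg : G, gg • a ∈ closedBall a ε'' → gg • a = a := fun gg hgg =>
          hdisc₀ gg (closedBall_subset_closedBall (min_le_right _ _) hgg)
        have hevent : ∀ᶠ m in atTop, (gb⁻¹ * Γ m) • a = a := by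
          filter_upwards [hev] with m hm
          rw [mul_smul, hm, ← hgba, inv_smul_smul]
        have htd : Tendsto (fun m => (gb⁻¹ * Γ m) • a) atTop (𝓝 a) :=
          tendsto_const_nhds.congr' (by filter_upwards [hevent] with m hm; rw [hm])
        obtain ⟨V, hV, N, hVN⟩ :=
          L1 (x := fun _ => a) tendsto_const_nhds htd hε''pos hcpt'' hdisc''
        have hbV : ∀ᶠ m in atTop, b (φ (ψ m)) ∈ V := hbsub hV
        obtain ⟨N', hN'⟩ := eventually_atTop.mp hbV
        refine ⟨max N N', fun m hm => ?_⟩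
        have h3 := hVN m (le_trans (le_max_left _ _) hm) _ (hN' m (le_trans (le_max_right _ _) hm))
        have h4 : dist ((gb⁻¹ * Γ m) • b (φ (ψ m))) a < ε'' := mem_ball.mp h3
        exact lt_of_lt_of_le h4 (min_le_left _ _)
      have h5 := ((continuous_const_smul gb).tendsto a).comp hkey
      rw [hgba] at h5
      refine h5.congr fun m => ?_
      show gb • (gb⁻¹ * Γ m) • b (φ (ψ m)) = Γ m • b (φ (ψ m))
      rw [← mul_smul, mul_inv_cancel_left]
    -- now derive the contradiction
    have hub : ∀ m, qfn θ (Γ m • a) (Γ m • b (φ (ψ m))) ≤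
        dist (Γ m • a) (Γ m • b (φ (ψ m))) + |θ (Γ m • a) - θ (Γ m • b (φ (ψ m)))| := by
      intro m
      have h6 : qfn θ (Γ m • a) (Γ m • b (φ (ψ m))) ≤
          min (dist (Γ m • a) (Γ m • b (φ (ψ m)))) 1 +
            |θ (Γ m • a) - θ (Γ m • b (φ (ψ m)))| := min_le_left _ _
      have h7 : min (dist (Γ m • a) (Γ m • b (φ (ψ m)))) 1 ≤
          dist (Γ m • a) (Γ m • b (φ (ψ m))) := min_le_left _ _
      linarith
    have hlim : Tendsto (fun m => dist (Γ m • a) (Γ m • b (φ (ψ m))) +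
        |θ (Γ m • a) - θ (Γ m • b (φ (ψ m)))|) atTop (𝓝 0) := by
      have hd : Tendsto (fun m => dist (Γ m • a) (Γ m • b (φ (ψ m)))) atTop (𝓝 0) := by
        have := hΓa.dist hgoal
        simpa using this
      have ht1 : Tendsto (fun m => θ (Γ m • a)) atTop (𝓝 (θ u)) := (hθc.tendsto u).comp hΓa
      have ht2 : Tendsto (fun m => θ (Γ m • b (φ (ψ m)))) atTop (𝓝 (θ u)) :=
        (hθc.tendsto u).comp hgoal
      have habs : Tendsto (fun m => |θ (Γ m • a) - θ (Γ m • b (φ (ψ m)))|) atTop (𝓝 0) := by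
        have := (ht1.sub ht2).abs
        simpa using this
      have := hd.add habs
      simpa using this
    have hevlt : ∀ᶠ m in atTop, dist (Γ m • a) (Γ m • b (φ (ψ m))) +
        |θ (Γ m • a) - θ (Γ m • b (φ (ψ m)))| < ε := by
      have : Set.Iio ε ∈ 𝓝 (0:ℝ) := Iio_mem_nhds hε
      exact hlim this
    obtain ⟨m, hm⟩ := hevlt.exists
    have := hq (φ (ψ m))
    have h8 := hub m
    have h9 : ε < qfn θ (Γ m • a) (Γ m • b (φ (ψ m))) := this
    linarith
  · -- Case II
    rw [Filter.not_frequently] at hfreq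
    have hcomb : ∀ᶠ k in atTop, θ (g k • a) ≤ ε / 4 ∧ 3 * ε / 4 < θ (g k • b k) := by
      filter_upwards [hfreq] with k hk
      push_neg at hk
      refine ⟨hk, ?_⟩
      have := hsum k
      linarith
    obtain ⟨φ, hφmono, hφprop⟩ := Filter.extraction_of_frequently_atTop hcomb.frequently
    have hmem : ∀ m, g (φ m) • b (φ m) ∈ {z : X | 3 * ε / 4 ≤ θ z} := fun m => (hφprop m).2.le
    obtain ⟨w, hwK, ψ, hψmono, hψlim⟩ := (hlev (3 * ε / 4) (by linarith)).tendsto_subseq hmem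
    have hbsub : Tendsto (fun m => b (φ (ψ m))) atTop (𝓝 a) :=
      hbtend.comp (hφmono.comp hψmono).tendsto_atTop
    have hev : ∀ᶠ m in atTop, g (φ (ψ m)) • a = w := L2 hbsub hψlim
    obtain ⟨m, hm⟩ := hev.exists
    have h3 : θ w ∈ {r : ℝ | 3 * ε / 4 ≤ r} := by
      have : w ∈ {z : X | 3 * ε / 4 ≤ θ z} := hwK
      exact this
    have h4 : θ (g (φ (ψ m)) • a) ≤ ε / 4 := (hφprop (ψ m)).1
    rw [hm] at h4
    have h5 : 3 * ε / 4 ≤ θ w := h3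
    linarith

end Sigma

theorem main : ∃ ρ : X → X → ℝ,
    (∀ a b : X, 0 ≤ ρ a b) ∧
    (∀ a b : X, ρ a b = 0 ↔ a = b) ∧
    (∀ a b : X, ρ a b = ρ b a) ∧
    (∀ a b c : X, ρ a c ≤ ρ a b + ρ b c) ∧
    (∀ (g : G) (a b : X), ρ (g • a) (g • b) = ρ a b) ∧
    (∀ s : Set X, IsOpen s ↔ ∀ a ∈ s, ∃ ε > 0, {b : X | ρ a b < ε} ⊆ s) := by
  classical
  rcases isEmpty_or_nonempty X with hX | hX
  · refine ⟨fun _ _ => 0, fun a => isEmptyElim a, fun a => isEmptyElim a, fun a => isEmptyElim a,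
      fun a => isEmptyElim a, fun _ a => isEmptyElim a, fun s => ?_⟩
    have hs : s = ∅ := Set.eq_empty_of_isEmpty s
    subst hs
    constructor
    · intro _ a ha; exact absurd ha (notMem_empty a)
    · intro _; exact isOpen_empty
  · -- choice of bump families, one per sector
    have hv : ∀ t : Set X, ∃ F : ℕ → X × ℝ, (∃ a : X, t = sec G a) →
        ((∀ n, 0 < (F n).2 ∧ IsCompact (closedBall (F n).1 (F n).2)) ∧
          ∀ x ∈ t, ∃ n, dist x (F n).1 ≤ (F n).2 / 2) := by
      intro t
      by_cases h : ∃ a : X, t = sec G a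
      · obtain ⟨a, rfl⟩ := h
        obtain ⟨F, hF1, hF2⟩ := exists_bump_family (sec_isSigmaCompact (G := G) a) ⟨a, mem_sec_self (G := G) a⟩
        exact ⟨F, fun _ => ⟨hF1, hF2⟩⟩
      · obtain ⟨x⟩ := hX
        exact ⟨fun _ => (x, 1), fun hcon => absurd hcon h⟩
    choose P hP using hv
    have hP1 : ∀ a : X, ∀ n, 0 < (P (sec G a) n).2 ∧
        IsCompact (closedBall (P (sec G a) n).1 (P (sec G a) n).2) :=
      fun a => (hP _ ⟨a, rfl⟩).1
    have hP2 : ∀ a : X, ∀ x ∈ sec G a, ∃ n, dist x (P (sec G a) n).1 ≤ (P (sec G a) n).2 / 2 :=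
      fun a => (hP _ ⟨a, rfl⟩).2
    -- bump functions
    set θf : X → ℕ → X → ℝ := fun a n => bump (P (sec G a) n).1 (P (sec G a) n).2 with hθf
    have hθ0 : ∀ a n z, 0 ≤ θf a n z := fun a n z => bump_nonneg _ _ _
    have hθ1 : ∀ a n z, θf a n z ≤ 1 := fun a n z => bump_le_one _ (hP1 a n).1 _
    have hθc : ∀ a n, Continuous (θf a n) := fun a n => bump_continuous _ _
    have hθlev : ∀ a n, ∀ u : ℝ, 0 < u → IsCompact {z : X | u ≤ θf a n z} :=
      fun a n u hu => bump_level_compact (hP1 a n).1 (hP1 a n).2 hu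
    have hθsec : ∀ {a b : X}, sec G a = sec G b → θf a = θf b := by
      intro a b h
      rw [hθf]
      simp only [h]
    -- the pseudometrics
    set σ' : X → X → ℕ → ℝ := fun a b n => sig G (θf a n) a b with hσ'
    set trm : X → X → ℕ → ℝ := fun a b n => (1/2:ℝ)^(n+1) * min (σ' a b n) 1 with htrm
    have htrm0 : ∀ a b n, 0 ≤ trm a b n := by
      intro a b n
      show 0 ≤ (1/2:ℝ)^(n+1) * min (σ' a b n) 1
      apply mul_nonneg (by positivity)
      exact le_min (sig_nonneg (hθ0 a n) (hθ1 a n) a b) zero_le_one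
    have htrmle : ∀ a b n, trm a b n ≤ (1/2:ℝ)^(n+1) := by
      intro a b n
      have h1 : min (σ' a b n) 1 ≤ 1 := min_le_right _ _
      show (1/2:ℝ)^(n+1) * min (σ' a b n) 1 ≤ (1/2:ℝ)^(n+1)
      calc (1/2:ℝ)^(n+1) * min (σ' a b n) 1 ≤ (1/2:ℝ)^(n+1) * 1 := by
            apply mul_le_mul_of_nonneg_left h1 (by positivity)
        _ = (1/2:ℝ)^(n+1) := mul_one _
    have hgeom : Summable (fun n : ℕ => (1/2:ℝ)^(n+1)) :=
      (summable_geometric_two.mul_right (1/2)).congr fun n => (pow_succ _ _).symm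
    have hgeosum : ∑' n : ℕ, (1/2:ℝ)^(n+1) = 1 := by
      have h1 : (fun n : ℕ => (1/2:ℝ)^(n+1)) = fun n : ℕ => (1/2:ℝ)^n * (1/2) :=
        funext fun n => pow_succ _ _
      rw [h1, tsum_mul_right, tsum_geometric_two]
      norm_num
    have hsum : ∀ a b, Summable (trm a b) := fun a b =>
      Summable.of_nonneg_of_le (htrm0 a b) (htrmle a b) hgeom
    have htsum_le_one : ∀ a b, ∑' n, trm a b n ≤ 1 := fun a b =>
      le_of_le_of_eq (Summable.tsum_le_tsum (htrmle a b) (hsum a b) hgeom) hgeosum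
    have htsum_nonneg : ∀ a b, 0 ≤ ∑' n, trm a b n := fun a b => tsum_nonneg (htrm0 a b)
    set ρ : X → X → ℝ := fun a b => if sec G a = sec G b then ∑' n, trm a b n else 1 with hρ
    have hρpos : ∀ a b, 0 ≤ ρ a b := by
      intro a b
      simp only [hρ]
      split_ifs
      · exact htsum_nonneg a b
      · exact zero_le_one
    -- the covering index at a point
    have hcov : ∀ a : X, ∃ n, 1/2 ≤ θf a n a := by
      intro a
      obtain ⟨n, hn⟩ := hP2 a a (mem_sec_self a)
      exact ⟨n, bump_center (hP1 a n).1 hn⟩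
    refine ⟨ρ, hρpos, ?_, ?_, ?_, ?_, ?_⟩
    · -- eq zero iff
      intro a b
      constructor
      · intro h
        by_cases hs : sec G a = sec G b
        · simp only [hρ] at h
          simp only [if_pos hs] at h
          obtain ⟨n₀, hn₀⟩ := hcov a
          have h1 : trm a b n₀ ≤ ∑' n, trm a b n :=
            Summable.le_tsum (hsum a b) n₀ (fun j _ => htrm0 a b j)
          rw [h] at h1
          have h2 : (1/2:ℝ)^(n₀+1) * min (σ' a b n₀) 1 = 0 :=
            le_antisymm h1 (htrm0 a b n₀)
          have h3 : min (σ' a b n₀) 1 = 0 := by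
            have hp : (0:ℝ) < (1/2:ℝ)^(n₀+1) := by positivity
            rcases mul_eq_zero.mp h2 with h4 | h4
            · exact absurd h4 (ne_of_gt hp)
            · exact h4
          have h5 : σ' a b n₀ = 0 := by
            rcases min_cases (σ' a b n₀) 1 with ⟨h6, _⟩ | ⟨h6, _⟩
            · rw [← h6]; exact h3
            · rw [h6] at h3; norm_num at h3
          have h7 : min (dist a b) (1/2:ℝ) ≤ σ' a b n₀ :=
            sig_lower (G := G) (hθ0 a n₀) (hθ1 a n₀) (b := b) hn₀
          rw [h5] at h7
          rcases min_cases (dist a b) (1/2 : ℝ) with ⟨h8, _⟩ | ⟨h8, _⟩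
          · rw [h8] at h7
            exact eq_of_dist_eq_zero (le_antisymm h7 dist_nonneg)
          · rw [h8] at h7; norm_num at h7
        · simp only [hρ] at h
          simp only [if_neg hs] at h
          norm_num at h
      · rintro rfl
        simp only [hρ]
        simp only [if_true]
        have h1 : trm a a = fun _ => (0:ℝ) := by
          funext n
          show (1/2:ℝ)^(n+1) * min (σ' a a n) 1 = 0
          have h2 : σ' a a n = 0 := sig_self (hθ0 a n) a
          rw [h2]
          norm_num
        rw [h1]
        exact tsum_zero
    · -- symmetry
      intro a b
      simp only [hρ]
      by_cases hs : sec G a = sec G b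
      · simp only [if_pos hs, if_pos hs.symm]
        congr 1
        funext n
        show (1/2:ℝ)^(n+1) * min (σ' a b n) 1 = (1/2:ℝ)^(n+1) * min (σ' b a n) 1
        congr 1
        show min (sig G (θf a n) a b) 1 = min (sig G (θf b n) b a) 1
        rw [congrFun (hθsec hs.symm) n]
        rw [show sig G (θf a n) a b = sig G (θf a n) b a from sig_symm a b]
      · have hs' : ¬ sec G b = sec G a := fun h => hs h.symm
        rw [if_neg hs, if_neg hs']
    · -- triangle
      intro a b c
      by_cases hab : sec G a = sec G b
      · by_cases hbc : sec G b = sec G c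
        · have hac : sec G a = sec G c := hab.trans hbc
          simp only [hρ]
          simp only [if_pos hab, if_pos hbc, if_pos hac]
          rw [← Summable.tsum_add (hsum a b) (hsum b c)]
          apply Summable.tsum_le_tsum _ (hsum a c) ((hsum a b).add (hsum b c))
          intro n
          have hθbc : θf b n = θf a n := congrFun (hθsec hab.symm) n
          have htria : σ' a c n ≤ σ' a b n + σ' b c n := by
            show sig G (θf a n) a c ≤ sig G (θf a n) a b + sig G (θf b n) b c
            rw [hθbc]
            exact sig_triangle (hθ0 a n) (hθ1 a n) a b c
          have hm : min (σ' a c n) 1 ≤ min (σ' a b n) 1 + min (σ' b c n) 1 := by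
            have h1 : min (σ' a c n) 1 ≤ min (σ' a b n + σ' b c n) 1 :=
              min_le_min htria le_rfl
            have h2 := min_one_subadd (σ' a b n) (σ' b c n)
              (sig_nonneg (hθ0 a n) (hθ1 a n) a b)
              (sig_nonneg (hθ0 b n) (hθ1 b n) b c)
            exact h1.trans h2
          show (1/2:ℝ)^(n+1) * min (σ' a c n) 1 ≤
            (1/2:ℝ)^(n+1) * min (σ' a b n) 1 + (1/2:ℝ)^(n+1) * min (σ' b c n) 1
          calc (1/2:ℝ)^(n+1) * min (σ' a c n) 1
              ≤ (1/2:ℝ)^(n+1) * (min (σ' a b n) 1 + min (σ' b c n) 1) :=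
                mul_le_mul_of_nonneg_left hm (by positivity)
            _ = (1/2:ℝ)^(n+1) * min (σ' a b n) 1 + (1/2:ℝ)^(n+1) * min (σ' b c n) 1 :=
                mul_add _ _ _
        · have hac : ¬ sec G a = sec G c := fun h => hbc (hab.symm.trans h)
          simp only [hρ]
          simp only [if_neg hac, if_pos hab, if_neg hbc]
          linarith [htsum_nonneg a b]
      · by_cases hbc : sec G b = sec G c
        · have hac : ¬ sec G a = sec G c := fun h => hab (h.trans hbc.symm)
          simp only [hρ]
          simp only [if_neg hac, if_neg hab, if_pos hbc]
          linarith [htsum_nonneg b c]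
        · simp only [hρ]
          simp only [if_neg hab, if_neg hbc]
          by_cases hac : sec G a = sec G c
          · simp only [if_pos hac]
            linarith [htsum_le_one a c]
          · simp only [if_neg hac]
            norm_num
    · -- invariance
      intro g a b
      simp only [hρ]
      have hsa : sec G (g • a) = sec G a := sec_smul g a
      have hsb : sec G (g • b) = sec G b := sec_smul g b
      by_cases hs : sec G a = sec G b
      · have hgs : sec G (g • a) = sec G (g • b) := by rw [hsa, hsb]; exact hs
        rw [if_pos hgs, if_pos hs]
        congr 1
        funext n
        show (1/2:ℝ)^(n+1) * min (σ' (g • a) (g • b) n) 1 = (1/2:ℝ)^(n+1) * min (σ' a b n) 1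
        congr 1
        show min (sig G (θf (g • a) n) (g • a) (g • b)) 1 = min (sig G (θf a n) a b) 1
        rw [congrFun (hθsec hsa) n]
        rw [show sig G (θf a n) (g • a) (g • b) = sig G (θf a n) a b from
          sig_smul (hθ1 a n) g a b]
      · have hgs : ¬ sec G (g • a) = sec G (g • b) := by rw [hsa, hsb]; exact hs
        rw [if_neg hgs, if_neg hs]
    · -- topology
      intro s
      constructor
      · intro hs a ha
        obtain ⟨ε', hε', hball'⟩ := Metric.isOpen_iff.mp hs a ha
        obtain ⟨n₀, hn₀⟩ := hcov a
        set c := min (ε'/2) (1/4 : ℝ) with hcdef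
        have hc : 0 < c := lt_min (by linarith) (by norm_num)
        refine ⟨(1/2:ℝ)^(n₀+1) * c, by positivity, ?_⟩
        intro b hb
        simp only [mem_setOf_eq] at hb
        have hsec : sec G a = sec G b := by
          by_contra h
          simp only [hρ] at hb
          simp only [if_neg h] at hb
          have h1 : (1/2:ℝ)^(n₀+1) ≤ 1/2 := by
            calc (1/2:ℝ)^(n₀+1) ≤ (1/2:ℝ)^1 :=
                  pow_le_pow_of_le_one (by norm_num) (by norm_num) (Nat.le_add_left 1 n₀)
              _ = 1/2 := pow_one _
          have h2 : c ≤ 1/4 := min_le_right _ _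
          nlinarith
        simp only [hρ] at hb
        simp only [if_pos hsec] at hb
        have h1 : trm a b n₀ ≤ ∑' n, trm a b n :=
          Summable.le_tsum (hsum a b) n₀ (fun j _ => htrm0 a b j)
        have h1' : (1/2:ℝ)^(n₀+1) * min (σ' a b n₀) 1 ≤ ∑' n, trm a b n := h1
        have h2 : (1/2:ℝ)^(n₀+1) * min (σ' a b n₀) 1 < (1/2:ℝ)^(n₀+1) * c :=
          lt_of_le_of_lt h1' hb
        have h3 : min (σ' a b n₀) 1 < c :=
          lt_of_mul_lt_mul_left h2 (by positivity)
        have h4 : σ' a b n₀ < c := by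
          rcases min_cases (σ' a b n₀) 1 with ⟨h5, _⟩ | ⟨h5, _⟩
          · rw [← h5]; exact h3
          · rw [h5] at h3
            have : c ≤ 1/4 := min_le_right _ _
            linarith
        have h6 : min (dist a b) (1/2:ℝ) ≤ σ' a b n₀ :=
          sig_lower (G := G) (hθ0 a n₀) (hθ1 a n₀) (b := b) hn₀
        have h7 : min (dist a b) (1/2 : ℝ) < c := lt_of_le_of_lt h6 h4
        have h8 : dist a b < ε' := by
          rcases min_cases (dist a b) (1/2 : ℝ) with ⟨h9, _⟩ | ⟨h9, _⟩
          · rw [h9] at h7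
            have : c ≤ ε'/2 := min_le_left _ _
            linarith
          · rw [h9] at h7
            have : c ≤ 1/4 := min_le_right _ _
            linarith
        apply hball'
        rw [mem_ball, dist_comm]
        exact h8
      · intro hb
        rw [Metric.isOpen_iff]
        intro a ha
        obtain ⟨ε, hε, hsub⟩ := hb a ha
        obtain ⟨M, hM⟩ : ∃ M : ℕ, (1/2:ℝ)^M < ε/4 :=
          exists_pow_lt_of_lt_one (by linarith) (by norm_num)
        have hheads : ∀ m : ℕ, ∃ δ > 0, ∀ b, dist a b < δ → ∀ n < m, σ' a b n ≤ ε/4 := by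
          intro m
          induction m with
          | zero => exact ⟨1, one_pos, fun b _ n hn => absurd hn (Nat.not_lt_zero n)⟩
          | succ m ih =>
            obtain ⟨δ₁, hδ₁, h₁⟩ := ih
            obtain ⟨δ₂, hδ₂, h₂⟩ := sig_cont (G := G) (hθc a m) (hθ0 a m) (hθ1 a m)
              (hθlev a m) a (by linarith : (0:ℝ) < ε/4)
            refine ⟨min δ₁ δ₂, lt_min hδ₁ hδ₂, fun b hbd n hn => ?_⟩
            rcases Nat.lt_succ_iff_lt_or_eq.mp hn with h | h
            · exact h₁ b (lt_of_lt_of_le hbd (min_le_left _ _)) n h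
            · subst h
              exact h₂ b (lt_of_lt_of_le hbd (min_le_right _ _))
        obtain ⟨δ, hδ, hδprop⟩ := hheads M
        obtain ⟨δs, hδs, hsecball⟩ := Metric.isOpen_iff.mp (sec_isOpen (G := G) a) a (mem_sec_self a)
        refine ⟨min δ δs, lt_min hδ hδs, fun b hbmem => ?_⟩
        apply hsub
        simp only [mem_setOf_eq]
        have hbsec : b ∈ sec G a := hsecball (mem_ball.mpr
          (lt_of_lt_of_le (mem_ball.mp hbmem) (min_le_right _ _)))
        have hsec : sec G a = sec G b := (sec_eq_of_mem hbsec).symm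
        have hdab : dist a b < δ := by
          rw [dist_comm]
          exact lt_of_lt_of_le (mem_ball.mp hbmem) (min_le_left _ _)
        simp only [hρ]
        simp only [if_pos hsec]
        -- split the sum
        have hsplit : (∑ i ∈ Finset.range M, trm a b i) + (∑' i, trm a b (i + M)) =
            ∑' i, trm a b i := Summable.sum_add_tsum_nat_add M (hsum a b)
        have hhead : (∑ i ∈ Finset.range M, trm a b i) ≤ ε/4 := by
          have h1 : ∀ i ∈ Finset.range M, trm a b i ≤ (1/2:ℝ)^(i+1) * (ε/4) := by
            intro i hi
            show (1/2:ℝ)^(i+1) * min (σ' a b i) 1 ≤ (1/2:ℝ)^(i+1) * (ε/4)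
            apply mul_le_mul_of_nonneg_left _ (by positivity)
            have h2 : σ' a b i ≤ ε/4 := hδprop b hdab i (Finset.mem_range.mp hi)
            exact le_trans (min_le_left _ _) h2
          calc (∑ i ∈ Finset.range M, trm a b i)
              ≤ ∑ i ∈ Finset.range M, (1/2:ℝ)^(i+1) * (ε/4) := Finset.sum_le_sum h1
            _ = (∑ i ∈ Finset.range M, (1/2:ℝ)^(i+1)) * (ε/4) := by
                rw [Finset.sum_mul]
            _ ≤ 1 * (ε/4) := by
                apply mul_le_mul_of_nonneg_right _ (by linarith)
                calc (∑ i ∈ Finset.range M, (1/2:ℝ)^(i+1))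
                    ≤ ∑' i : ℕ, (1/2:ℝ)^(i+1) :=
                      Summable.sum_le_tsum (Finset.range M) (fun i _ => by positivity) hgeom
                  _ = 1 := hgeosum
            _ = ε/4 := one_mul _
        have htail : (∑' i, trm a b (i + M)) ≤ (1/2:ℝ)^M := by
          have hsum1 : Summable (fun i => trm a b (i + M)) :=
            (summable_nat_add_iff M).mpr (hsum a b)
          have hsum2 : Summable (fun i : ℕ => (1/2:ℝ)^(i + M + 1)) :=
            (summable_nat_add_iff M).mpr hgeom |>.congr (fun i => by ring_nf)
          calc (∑' i, trm a b (i + M)) ≤ ∑' i : ℕ, (1/2:ℝ)^(i + M + 1) := by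
                apply Summable.tsum_le_tsum _ hsum1 hsum2
                intro i
                exact htrmle a b (i + M)
            _ = ∑' i : ℕ, (1/2:ℝ)^M * (1/2:ℝ)^(i+1) := by
                congr 1
                funext i
                rw [← pow_add]
                congr 1
                ring
            _ = (1/2:ℝ)^M * ∑' i : ℕ, (1/2:ℝ)^(i+1) := by rw [tsum_mul_left]
            _ = (1/2:ℝ)^M := by rw [hgeosum, mul_one]
        calc ∑' i, trm a b i = (∑ i ∈ Finset.range M, trm a b i) + (∑' i, trm a b (i + M)) :=
              hsplit.symm
          _ ≤ ε/4 + (1/2:ℝ)^M := add_le_add hhead htail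
          _ < ε/4 + ε/4 := by linarith
          _ < ε := by linarith

end Stmt19Aux

/-- A metrizable, locally compact and locally connected space with an action of a
countable group whose orbit space is Hausdorff admits an invariant metric inducing its
topology. -/
theorem stmt19 {G X : Type*} [Group G] [Countable G] [TopologicalSpace X]
    [TopologicalSpace.MetrizableSpace X] [LocallyCompactSpace X]
    [LocallyConnectedSpace X] [MulAction G X] [ContinuousConstSMul G X]
    [T2Space (Quotient (MulAction.orbitRel G X))] :
    ∃ ρ : X → X → ℝ,
      (∀ a b : X, 0 ≤ ρ a b) ∧
      (∀ a b : X, ρ a b = 0 ↔ a = b) ∧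
      (∀ a b : X, ρ a b = ρ b a) ∧
      (∀ a b c : X, ρ a c ≤ ρ a b + ρ b c) ∧
      (∀ (g : G) (a b : X), ρ (g • a) (g • b) = ρ a b) ∧
      (∀ s : Set X, IsOpen s ↔ ∀ a ∈ s, ∃ ε > 0, {b : X | ρ a b < ε} ⊆ s) := by
  letI : MetricSpace X := TopologicalSpace.metrizableSpaceMetric X
  exact Stmt19Aux.main (G := G) (X := X)
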